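/- Let G be a graph on n vertices and t a positive number. Then Smon_t(G) = Pβ_{⌈nt/2⌉}(G), i.e., the minimum size of a τ-static monopoly over all threshold assignments τ with average threshold at least t equals the minimum size of a vertex set covering at least nt/2 edges of G. -/

import Mathlib

open Finset

variable {V : Type*}

noncomputable section

/-- The set of edges of `G` covered by the vertex set `S` (i.e. incident with some vertex of `S`). -/
def coveredEdges (G : SimpleGraph V) [Fintype V] [DecidableEq V] [DecidableRel G.Adj]
    (S : Finset V) : Finset (Sym2 V) :=
  G.edgeFinset.filter (fun e => ∃ v ∈ S, v ∈ e)

/-- `τ` is a valid threshold assignment: `0 ≤ τ v ≤ deg v`. -/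
def validThresholds (G : SimpleGraph V) [Fintype V] [DecidableRel G.Adj] (τ : V → ℕ) : Prop :=
  ∀ v, τ v ≤ G.degree v

/-- `M` is a `τ`-static monopoly: every vertex outside `M` has at least `τ v` neighbors in `M`. -/
def isMonopoly (G : SimpleGraph V) [Fintype V] [DecidableEq V] [DecidableRel G.Adj]
    (τ : V → ℕ) (M : Finset V) : Prop :=
  ∀ v ∉ M, τ v ≤ (G.neighborFinset v ∩ M).card

/-- One activation step: add all vertices with at least `τ v` neighbors among active vertices. -/
def dynStep (G : SimpleGraph V) [Fintype V] [DecidableEq V] [DecidableRel G.Adj]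
    (τ : V → ℕ) (A : Finset V) : Finset V :=
  A ∪ Finset.univ.filter (fun v => τ v ≤ (G.neighborFinset v ∩ A).card)

/-- `D` is a `τ`-dynamic monopoly: iterating activation from `D` reaches all vertices. -/
def isDynMonopoly (G : SimpleGraph V) [Fintype V] [DecidableEq V] [DecidableRel G.Adj]
    (τ : V → ℕ) (D : Finset V) : Prop :=
  ∃ k, (dynStep G τ)^[k] D = Finset.univ

/-- `Pbeta G s`: minimum size of a vertex set covering at least `s` edges of `G`. -/
def Pbeta (G : SimpleGraph V) [Fintype V] [DecidableEq V] [DecidableRel G.Adj] (s : ℕ) : ℕ :=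
  sInf {c | ∃ S : Finset V, S.card = c ∧ s ≤ (coveredEdges G S).card}

/-- `Smon G t`: minimum size of a `τ`-static monopoly over all valid `τ` with average at least `t`. -/
def Smon (G : SimpleGraph V) [Fintype V] [DecidableEq V] [DecidableRel G.Adj] (t : ℝ) : ℕ :=
  sInf {c | ∃ (τ : V → ℕ) (M : Finset V), validThresholds G τ ∧
    (Fintype.card V : ℝ) * t ≤ ∑ v, (τ v : ℝ) ∧ isMonopoly G τ M ∧ M.card = c}

/-- `Sdyn G t`: minimum size of a `τ`-dynamic monopoly over all valid `τ` with average at least `t`. -/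
def Sdyn (G : SimpleGraph V) [Fintype V] [DecidableEq V] [DecidableRel G.Adj] (t : ℝ) : ℕ :=
  sInf {c | ∃ (τ : V → ℕ) (D : Finset V), validThresholds G τ ∧
    (Fintype.card V : ℝ) * t ≤ ∑ v, (τ v : ℝ) ∧ isDynMonopoly G τ D ∧ D.card = c}

/-- The subgraph of `G` consisting of the edges covered by `S`. -/
def restrictG (G : SimpleGraph V) (S : Finset V) : SimpleGraph V where
  Adj u v := G.Adj u v ∧ (u ∈ S ∨ v ∈ S)
  symm := ⟨fun _ _ ⟨h, hs⟩ => ⟨h.symm, hs.symm⟩⟩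
  loopless := ⟨fun v ⟨h, _⟩ => G.loopless.irrefl v h⟩

instance (G : SimpleGraph V) [DecidableEq V] [DecidableRel G.Adj] (S : Finset V) :
    DecidableRel (restrictG G S).Adj :=
  fun u v => inferInstanceAs (Decidable (G.Adj u v ∧ (u ∈ S ∨ v ∈ S)))

lemma restrictG_edgeFinset (G : SimpleGraph V) [Fintype V] [DecidableEq V] [DecidableRel G.Adj]
    (S : Finset V) : (restrictG G S).edgeFinset = coveredEdges G S := by
  ext e
  induction e with
  | h u v =>
    rw [SimpleGraph.mem_edgeFinset, SimpleGraph.mem_edgeSet]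
    simp [SimpleGraph.mem_edgeFinset, SimpleGraph.mem_edgeSet, restrictG, Sym2.mem_iff,
      coveredEdges]
    aesop

lemma restrictG_neighborFinset (G : SimpleGraph V) [Fintype V] [DecidableEq V]
    [DecidableRel G.Adj] (S : Finset V) (v : V) : (restrictG G S).neighborFinset v =
    if v ∈ S then G.neighborFinset v else G.neighborFinset v ∩ S := by
  ext u
  rw [SimpleGraph.mem_neighborFinset]
  by_cases hv : v ∈ S <;>
    simp [SimpleGraph.mem_neighborFinset, restrictG, hv]

lemma key_count (G : SimpleGraph V) [Fintype V] [DecidableEq V] [DecidableRel G.Adj]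
    (S : Finset V) :
    ∑ v ∈ S, G.degree v + ∑ v ∈ Sᶜ, (G.neighborFinset v ∩ S).card
      = 2 * (coveredEdges G S).card := by
  have hdeg : ∀ v, (restrictG G S).degree v =
      if v ∈ S then G.degree v else (G.neighborFinset v ∩ S).card := by
    intro v
    rw [SimpleGraph.degree, restrictG_neighborFinset]
    split <;> rfl
  rw [← restrictG_edgeFinset, ← SimpleGraph.sum_degrees_eq_twice_card_edges,
    ← Finset.sum_add_sum_compl S (fun v => (restrictG G S).degree v)]
  congr 1
  · exact Finset.sum_congr rfl fun v hv => by rw [hdeg]; simp [hv]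
  · exact Finset.sum_congr rfl fun v hv => by
      rw [hdeg]; simp [Finset.mem_compl.mp hv]

theorem stmt5 (G : SimpleGraph V) [Fintype V] [DecidableEq V] [DecidableRel G.Adj]
    (t : ℝ) (ht : 0 < t) :
    Smon G t = Pbeta G ⌈(Fintype.card V : ℝ) * t / 2⌉₊ := by
  unfold Smon Pbeta
  congr 1
  ext c
  constructor
  · rintro ⟨τ, M, hvalid, hsum, hmono, rfl⟩
    refine ⟨M, rfl, ?_⟩
    rw [Nat.ceil_le]
    have key := key_count G M
    have h1 : ∑ v ∈ M, τ v ≤ ∑ v ∈ M, G.degree v :=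
      Finset.sum_le_sum fun v _ => hvalid v
    have h2 : ∑ v ∈ Mᶜ, τ v ≤ ∑ v ∈ Mᶜ, (G.neighborFinset v ∩ M).card :=
      Finset.sum_le_sum fun v hv => hmono v (Finset.mem_compl.mp hv)
    have htot : ∑ v, τ v ≤ 2 * (coveredEdges G M).card := by
      rw [← Finset.sum_add_sum_compl M τ, ← key]
      omega
    have hsum' : (Fintype.card V : ℝ) * t ≤ (∑ v, τ v : ℕ) := by
      rw [Nat.cast_sum]; exact hsum
    have := Nat.cast_le (α := ℝ) |>.mpr htot
    push_cast at this
    linarith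
  · rintro ⟨S, rfl, hcov⟩
    refine ⟨fun v => if v ∈ S then G.degree v else (G.neighborFinset v ∩ S).card, S,
      fun v => ?_, ?_, fun v hv => ?_, rfl⟩
    · by_cases hv : v ∈ S
      · simp [hv]
      · simpa [hv] using Finset.card_le_card (Finset.inter_subset_left (s₁ := G.neighborFinset v) (s₂ := S))
    · have key := key_count G S
      have hsum : (∑ v, (if v ∈ S then G.degree v else (G.neighborFinset v ∩ S).card)) =
          2 * (coveredEdges G S).card := by
        rw [← Finset.sum_add_sum_compl S, ← key]
        congr 1
        · exact Finset.sum_congr rfl fun v hv => by simp [hv]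
        · exact Finset.sum_congr rfl fun v hv => by simp [Finset.mem_compl.mp hv]
      have h1 : (Fintype.card V : ℝ) * t / 2 ≤ (coveredEdges G S).card :=
        le_trans (Nat.le_ceil _) (by exact_mod_cast hcov)
      rw [← Nat.cast_sum, hsum]
      push_cast
      linarith
    · simp [hv]

end
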